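/- Any panoptigon P of lattice width at least 3 satisfies |P ∩ ℤ²| ≤ 13. -/

import Mathlib

set_option maxHeartbeats 1000000

/-- Embedding of the integer lattice into the real plane. -/
def latticeEmb : ℤ × ℤ → ℝ × ℝ := fun p => ((p.1 : ℝ), (p.2 : ℝ))

namespace Panop

/-- Context for the combinatorial argument: `M` is the set of lattice points of the
polygon, `p0` the panoptigon point. -/
structure Cfg : Type where
  M : ℤ × ℤ → Prop
  p0 : ℤ × ℤ
  hp0 : M p0
  h3 : ∀ a b c w : ℤ × ℤ, M a → M b → M c → ∀ A B C : ℝ, 0 ≤ A → 0 ≤ B → 0 ≤ C →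
      A + B + C = 1 → (w.1 : ℝ) = A * a.1 + B * b.1 + C * c.1 →
      (w.2 : ℝ) = A * a.2 + B * b.2 + C * c.2 → M w
  hprim : ∀ q, M q → q ≠ p0 → Int.gcd (q.1 - p0.1) (q.2 - p0.2) = 1
  hwidth : ∀ a b : ℤ, Int.gcd a b = 1 → ∃ z₁ z₂ : ℤ × ℤ, M z₁ ∧ M z₂ ∧
      (a * z₁.2 - b * z₁.1) - (a * z₂.2 - b * z₂.1) ≥ 3

lemma Cfg.seg (cfg : Cfg) {a b : ℤ × ℤ} (ha : cfg.M a) (hb : cfg.M b) (w : ℤ × ℤ)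
    (A B : ℝ) (hA : 0 ≤ A) (hB : 0 ≤ B) (hs : A + B = 1)
    (e1 : (w.1 : ℝ) = A * a.1 + B * b.1) (e2 : (w.2 : ℝ) = A * a.2 + B * b.2) :
    cfg.M w :=
  cfg.h3 a b b w ha hb hb A B 0 hA hB le_rfl (by linarith)
    (by rw [e1]; ring) (by rw [e2]; ring)

lemma Cfg.even_eq (cfg : Cfg) {q : ℤ × ℤ} (hq : cfg.M q)
    (h1 : (2:ℤ) ∣ q.1 - cfg.p0.1) (h2 : (2:ℤ) ∣ q.2 - cfg.p0.2) : q = cfg.p0 := by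
  by_contra hne
  have hg := cfg.hprim q hq hne
  have h2d : (2:ℤ) ∣ (Int.gcd (q.1 - cfg.p0.1) (q.2 - cfg.p0.2) : ℤ) := Int.dvd_coe_gcd h1 h2
  rw [hg] at h2d
  norm_num at h2d

lemma par {e d : ℤ × ℤ} (he : Int.gcd e.1 e.2 = 1)
    (h : e.1 * d.2 - e.2 * d.1 = 0) : ∃ j : ℤ, d.1 = j * e.1 ∧ d.2 = j * e.2 := by
  rcases eq_or_ne e.1 0 with h1 | h1
  · have he2 : e.2 = 1 ∨ e.2 = -1 := by
      rw [h1] at he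
      simp [Int.gcd] at he
      omega
    have hd1 : d.1 = 0 := by
      rcases he2 with h2 | h2 <;> rw [h1, h2] at h <;> omega
    refine ⟨d.2 * e.2, by rw [h1, hd1]; ring, ?_⟩
    rcases he2 with h2 | h2 <;> rw [h2] <;> ring
  · have hc : IsCoprime e.1 e.2 := Int.isCoprime_iff_gcd_eq_one.mpr he
    have hdvd : e.1 ∣ e.2 * d.1 := ⟨d.2, by linarith⟩
    have hd : e.1 ∣ d.1 := hc.dvd_of_dvd_mul_left hdvd
    obtain ⟨j, hj⟩ := hd
    refine ⟨j, by rw [hj]; ring, ?_⟩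
    have : e.1 * d.2 = e.1 * (j * e.2) := by
      rw [hj] at h
      linear_combination h
    exact mul_left_cancel₀ h1 this

lemma bez {e : ℤ × ℤ} (he : Int.gcd e.1 e.2 = 1) :
    ∃ w : ℤ × ℤ, e.1 * w.2 - e.2 * w.1 = 1 := by
  have h := Int.gcd_eq_gcd_ab e.1 e.2
  rw [he] at h
  refine ⟨(-(Int.gcdB e.1 e.2), Int.gcdA e.1 e.2), ?_⟩
  push_cast at h
  simp only []
  linarith

lemma parity9 : ∀ eps c g : ZMod 2 × ZMod 2, eps.1 * g.2 - eps.2 * g.1 = 1 → c ≠ 0 →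
    c + eps ≠ 0 → (c + g = 0 ∨ c + g + eps = 0) := by decide

lemma solve2 : ∀ h k w : ZMod 2 × ZMod 2, h ≠ 0 → k ≠ 0 → h ≠ k →
    ∃ a b : ZMod 2, a * h.1 + b * k.1 = w.1 ∧ a * h.2 + b * k.2 = w.2 := by decide

lemma zmod2_cases : ∀ a : ZMod 2, a = 0 ∨ a = 1 := by decide

lemma cover4 : ∀ u : ZMod 4 × ZMod 4, ¬((u.1 = 0 ∨ u.1 = 2) ∧ (u.2 = 0 ∨ u.2 = 2)) →
    ((u = (1,0) ∨ u = (3,0)) ∨ (u = (0,1) ∨ u = (0,3)) ∨ (u = (1,1) ∨ u = (3,3)) ∨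
     (u = (1,3) ∨ u = (3,1)) ∨ (u = (2,1) ∨ u = (2,3)) ∨ (u = (1,2) ∨ u = (3,2))) := by
  decide

lemma two_mul_zmod4 : ∀ u : ZMod 4, 2 * u = 0 ∨ 2 * u = 2 := by decide

lemma dvd2_iff (x : ℤ) : (2:ℤ) ∣ x ↔ ((x : ZMod 2) = 0) := by
  rw [ZMod.intCast_zmod_eq_zero_iff_dvd]; norm_num

lemma dvd4_iff (x : ℤ) : (4:ℤ) ∣ x ↔ ((x : ZMod 4) = 0) := by
  rw [ZMod.intCast_zmod_eq_zero_iff_dvd]; norm_num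

lemma dvd2_iff4 (x : ℤ) : (2:ℤ) ∣ x ↔ ((x : ZMod 4) = 0 ∨ (x : ZMod 4) = 2) := by
  constructor
  · rintro ⟨y, rfl⟩
    have h : ((2 * y : ℤ) : ZMod 4) = 2 * (y : ZMod 4) := by push_cast; ring
    rw [h]
    exact two_mul_zmod4 _
  · rintro (h | h)
    · have := (dvd4_iff x).mpr h; omega
    · have h2 : ((x - 2 : ℤ) : ZMod 4) = 0 := by push_cast; rw [h]; ring
      have := (dvd4_iff _).mpr h2; omega

lemma zmod4_sub {x y : ℤ} (h : (x : ZMod 4) = (y : ZMod 4)) : (4:ℤ) ∣ x - y := by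
  rw [dvd4_iff]; push_cast; rw [h]; ring

lemma zmod4_add {x y : ℤ} {u : ZMod 4} (hx : (x : ZMod 4) = u) (hy : (y : ZMod 4) = -u) :
    (4:ℤ) ∣ x + y := by
  rw [dvd4_iff]; push_cast; rw [hx, hy]; ring




/-- Core lemma: 9 consecutive collinear points `p + j•e` in `M`, a point `z` at
lattice distance `≥ 2` on the positive side of the line, and `p0` off the line,
give a contradiction. -/
lemma Cfg.key (cfg : Cfg) (p e z : ℤ × ℤ) (he : Int.gcd e.1 e.2 = 1)
    (hline : ∀ j : ℤ, 0 ≤ j → j ≤ 8 → cfg.M (p.1 + j * e.1, p.2 + j * e.2))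
    (hz : cfg.M z) (ht : 2 ≤ e.1 * (z.2 - p.2) - e.2 * (z.1 - p.1))
    (hd : e.1 * (cfg.p0.2 - p.2) - e.2 * (cfg.p0.1 - p.1) ≠ 0) : False := by
  obtain ⟨w, hw⟩ := bez he
  set t : ℤ := e.1 * (z.2 - p.2) - e.2 * (z.1 - p.1) with htdef
  have ht2 : (2:ℤ) ≤ t := ht
  obtain ⟨γ, hγ1, hγ2⟩ := par (d := (z.1 - p.1 - t * w.1, z.2 - p.2 - t * w.2)) he
    (by simp only []; linear_combination (-t) * hw - htdef)
  simp only [] at hγ1 hγ2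
  have hz1 : z.1 = p.1 + t * w.1 + γ * e.1 := by linarith
  have hz2 : z.2 = p.2 + t * w.2 + γ * e.2 := by linarith
  set j : ℤ := γ / t + 1 with hj
  have hmod1 : 0 ≤ γ % t := Int.emod_nonneg γ (by omega)
  have hmod2 : γ % t < t := Int.emod_lt_of_pos γ (by omega)
  have hdm : t * (γ / t) + γ % t = γ := Int.mul_ediv_add_emod γ t
  have hjb1 : 1 ≤ t * j - γ := by
    rw [hj, mul_add, mul_one]; linarith
  have hjb2 : t * j - γ ≤ t := by
    rw [hj, mul_add, mul_one]; linarith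
  -- the four points at level 1
  have hq : ∀ i : ℤ, 0 ≤ i → i ≤ 3 →
      cfg.M (p.1 + w.1 + (j + i) * e.1, p.2 + w.2 + (j + i) * e.2) := by
    intro i hi0 hi3
    have hpM : cfg.M p := by simpa using hline 0 le_rfl (by norm_num)
    have hp8 : cfg.M (p.1 + 8 * e.1, p.2 + 8 * e.2) := by
      simpa using hline 8 (by norm_num) (by norm_num)
    have hti : t * i ≤ t * 3 := by
      apply mul_le_mul_of_nonneg_left hi3 (by omega)
    have hti0 : 0 ≤ t * i := mul_nonneg (by omega) hi0
    have hNpos : 1 ≤ t * (j + i) - γ := by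
      have : t * (j + i) = t * j + t * i := by ring
      omega
    have hNb : t * (j + i) - γ ≤ 8 * t - 8 := by
      have : t * (j + i) = t * j + t * i := by ring
      omega
    have htR : (2:ℝ) ≤ (t:ℝ) := by exact_mod_cast ht2
    have ht0R : (0:ℝ) < (t:ℝ) := by linarith
    set B : ℝ := ((t * (j + i) - γ : ℤ) : ℝ) / (8 * (t:ℝ)) with hB
    set C : ℝ := 1 / (t:ℝ) with hC
    have hBpos : 0 ≤ B := by
      apply div_nonneg _ (by linarith)
      exact_mod_cast (by omega : (0:ℤ) ≤ t * (j + i) - γ)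
    have hCpos : 0 ≤ C := by positivity
    have hApos : 0 ≤ 1 - B - C := by
      have h1 : ((t * (j + i) - γ : ℤ) : ℝ) ≤ 8 * (t:ℝ) - 8 := by
        exact_mod_cast hNb
      have h2 : B ≤ (8 * (t:ℝ) - 8) / (8 * (t:ℝ)) := by
        rw [hB]
        apply div_le_div_of_nonneg_right h1 (by linarith) |>.trans_eq rfl
      have h3 : (8 * (t:ℝ) - 8) / (8 * (t:ℝ)) = 1 - 1 / (t:ℝ) := by
        field_simp
      rw [h3] at h2
      rw [hC]
      linarith
    apply cfg.h3 p (p.1 + 8 * e.1, p.2 + 8 * e.2) z _ hpM hp8 hz (1 - B - C) B C hApos hBpos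
      hCpos (by ring) ?_ ?_
    · simp only []
      rw [hB, hC]
      have hz1R : (z.1 : ℝ) = p.1 + t * w.1 + γ * e.1 := by exact_mod_cast congrArg Int.cast hz1
      rw [hz1R]
      push_cast
      field_simp
      ring
    · simp only []
      rw [hB, hC]
      have hz2R : (z.2 : ℝ) = p.2 + t * w.2 + γ * e.2 := by exact_mod_cast congrArg Int.cast hz2
      rw [hz2R]
      push_cast
      field_simp
      ring
  -- parity endgame
  have hpM : cfg.M p := by simpa using hline 0 le_rfl (by norm_num)
  have hpeM : cfg.M (p.1 + e.1, p.2 + e.2) := by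
    simpa using hline 1 (by norm_num) (by norm_num)
  have hzero : ∀ q : ℤ × ℤ, cfg.M q → ((q.1 - cfg.p0.1 : ℤ) : ZMod 2) = 0 →
      ((q.2 - cfg.p0.2 : ℤ) : ZMod 2) = 0 → q = cfg.p0 := by
    intro q hq h1 h2
    exact cfg.even_eq hq ((dvd2_iff _).mpr h1) ((dvd2_iff _).mpr h2)
  set ε : ZMod 2 × ZMod 2 := ((e.1 : ZMod 2), (e.2 : ZMod 2)) with hε
  set c : ZMod 2 × ZMod 2 :=
    (((p.1 - cfg.p0.1 : ℤ) : ZMod 2), ((p.2 - cfg.p0.2 : ℤ) : ZMod 2)) with hc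
  set g : ZMod 2 × ZMod 2 :=
    (((w.1 + j * e.1 : ℤ) : ZMod 2), ((w.2 + j * e.2 : ℤ) : ZMod 2)) with hg
  have hdet : ε.1 * g.2 - ε.2 * g.1 = 1 := by
    have h1 : (e.1 * (w.2 + j * e.2) - e.2 * (w.1 + j * e.1) : ℤ) = 1 := by
      linear_combination hw
    have h2 : ε.1 * g.2 - ε.2 * g.1 =
        ((e.1 * (w.2 + j * e.2) - e.2 * (w.1 + j * e.1) : ℤ) : ZMod 2) := by
      rw [hε, hg]; push_cast; ring
    rw [h2, h1]; norm_num
  have hcne : c ≠ 0 := by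
    intro h
    have hpp : p = cfg.p0 :=
      hzero p hpM (congrArg Prod.fst h) (congrArg Prod.snd h)
    apply hd
    rw [← hpp]
    ring
  have hcene : c + ε ≠ 0 := by
    intro h
    have h1 : ((p.1 + e.1 - cfg.p0.1 : ℤ) : ZMod 2) = c.1 + ε.1 := by
      rw [hc, hε]; push_cast; ring
    have h2 : ((p.2 + e.2 - cfg.p0.2 : ℤ) : ZMod 2) = c.2 + ε.2 := by
      rw [hc, hε]; push_cast; ring
    have hpe : (p.1 + e.1, p.2 + e.2) = cfg.p0 := by
      apply hzero _ hpeM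
      · rw [h1]; exact congrArg Prod.fst h
      · rw [h2]; exact congrArg Prod.snd h
    apply hd
    have e1 : cfg.p0.1 = p.1 + e.1 := by rw [← hpe]
    have e2 : cfg.p0.2 = p.2 + e.2 := by rw [← hpe]
    rw [e1, e2]
    ring
  have h2z : (2 : ZMod 2) = 0 := by decide
  have casteq : ∀ i : ℤ, ((p.1 + w.1 + (j + i) * e.1 - cfg.p0.1 : ℤ) : ZMod 2)
      = c.1 + g.1 + (i : ZMod 2) * ε.1 := by
    intro i
    rw [hc, hg, hε]; push_cast; ring
  have casteq2 : ∀ i : ℤ, ((p.2 + w.2 + (j + i) * e.2 - cfg.p0.2 : ℤ) : ZMod 2)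
      = c.2 + g.2 + (i : ZMod 2) * ε.2 := by
    intro i
    rw [hc, hg, hε]; push_cast; ring
  have econtra : ∀ i₁ i₂ : ℤ, 0 ≤ i₁ → i₁ ≤ 3 → 0 ≤ i₂ → i₂ ≤ 3 → i₁ ≠ i₂ →
      ((i₁ : ZMod 2) * ε.1 = (i₂ : ZMod 2) * ε.1) →
      ((i₁ : ZMod 2) * ε.2 = (i₂ : ZMod 2) * ε.2) →
      (c.1 + g.1 + (i₁ : ZMod 2) * ε.1 = 0) → (c.2 + g.2 + (i₁ : ZMod 2) * ε.2 = 0) → False := by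
    intro i₁ i₂ hi₁0 hi₁3 hi₂0 hi₂3 hne heq1 heq2 hz1' hz2'
    have hm1 := hzero _ (hq i₁ hi₁0 hi₁3) (by rw [casteq]; exact hz1') (by rw [casteq2]; exact hz2')
    have hm2 := hzero _ (hq i₂ hi₂0 hi₂3)
      (by rw [casteq, ← heq1]; exact hz1') (by rw [casteq2, ← heq2]; exact hz2')
    have heqq := hm1.trans hm2.symm
    have c1 : p.1 + w.1 + (j + i₁) * e.1 = p.1 + w.1 + (j + i₂) * e.1 :=
      congrArg Prod.fst heqq
    have c2 : p.2 + w.2 + (j + i₁) * e.2 = p.2 + w.2 + (j + i₂) * e.2 :=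
      congrArg Prod.snd heqq
    have he1 : (i₁ - i₂) * e.1 = 0 := by linear_combination c1
    have he2 : (i₁ - i₂) * e.2 = 0 := by linear_combination c2
    have hii : i₁ - i₂ ≠ 0 := by omega
    have he10 : e.1 = 0 := by
      rcases mul_eq_zero.mp he1 with h | h
      · exact absurd h hii
      · exact h
    have he20 : e.2 = 0 := by
      rcases mul_eq_zero.mp he2 with h | h
      · exact absurd h hii
      · exact h
    rw [he10, he20] at he
    simp [Int.gcd] at he
  rcases parity9 ε c g hdet hcne hcene with h0 | h1
  · apply econtra 0 2 le_rfl (by norm_num) (by norm_num) (by norm_num) (by norm_num) ?_ ?_ ?_ ?_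
    · push_cast; simp [h2z]
    · push_cast; simp [h2z]
    · have h' := congrArg Prod.fst h0
      simp only [Prod.fst_add, Prod.fst_zero] at h'
      push_cast
      simpa using h'
    · have h' := congrArg Prod.snd h0
      simp only [Prod.snd_add, Prod.snd_zero] at h'
      push_cast
      simpa using h'
  · have h31 : (3 : ZMod 2) = 1 := by decide
    apply econtra 1 3 (by norm_num) (by norm_num) (by norm_num) (by norm_num) (by norm_num)
      ?_ ?_ ?_ ?_
    · push_cast; rw [h31]
    · push_cast; rw [h31]
    · have h' := congrArg Prod.fst h1
      simp only [Prod.fst_add, Prod.fst_zero] at h'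
      push_cast
      simpa using h'
    · have h' := congrArg Prod.snd h1
      simp only [Prod.snd_add, Prod.snd_zero] at h'
      push_cast
      simpa using h'



lemma Cfg.nine (cfg : Cfg) (p e : ℤ × ℤ) (he : Int.gcd e.1 e.2 = 1)
    (hline : ∀ j : ℤ, 0 ≤ j → j ≤ 8 → cfg.M (p.1 + j * e.1, p.2 + j * e.2)) : False := by
  by_cases hd : e.1 * (cfg.p0.2 - p.2) - e.2 * (cfg.p0.1 - p.1) = 0
  · obtain ⟨j₀, hj1, hj2⟩ := par (d := (cfg.p0.1 - p.1, cfg.p0.2 - p.2)) he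
      (by simp only []; linear_combination hd)
    simp only [] at hj1 hj2
    set j : ℤ := if j₀ ≤ 4 then 8 else 0 with hjdef
    have hjr : (0 ≤ j ∧ j ≤ 8) ∧ ((4:ℤ) ≤ j - j₀ ∨ j - j₀ ≤ -4) := by
      rw [hjdef]; split_ifs <;> omega
    have hPM := hline j hjr.1.1 hjr.1.2
    have hPne : (p.1 + j * e.1, p.2 + j * e.2) ≠ cfg.p0 := by
      intro hEq
      have c1 : p.1 + j * e.1 = cfg.p0.1 := congrArg Prod.fst hEq
      have c2 : p.2 + j * e.2 = cfg.p0.2 := congrArg Prod.snd hEq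
      have he1 : (j - j₀) * e.1 = 0 := by linear_combination c1 + hj1
      have he2 : (j - j₀) * e.2 = 0 := by linear_combination c2 + hj2
      have hii : j - j₀ ≠ 0 := by omega
      have he10 : e.1 = 0 := by
        rcases mul_eq_zero.mp he1 with h | h
        · exact absurd h hii
        · exact h
      have he20 : e.2 = 0 := by
        rcases mul_eq_zero.mp he2 with h | h
        · exact absurd h hii
        · exact h
      rw [he10, he20] at he
      simp [Int.gcd] at he
    have hgc := cfg.hprim _ hPM hPne
    have c1 : p.1 + j * e.1 - cfg.p0.1 = (j - j₀) * e.1 := by linear_combination -hj1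
    have c2 : p.2 + j * e.2 - cfg.p0.2 = (j - j₀) * e.2 := by linear_combination -hj2
    simp only [] at hgc
    rw [c1, c2, Int.gcd_mul_left, he, mul_one] at hgc
    omega
  · obtain ⟨z₁, z₂, hz₁, hz₂, hsp⟩ := cfg.hwidth e.1 e.2 he
    by_cases h1 : 2 ≤ e.1 * (z₁.2 - p.2) - e.2 * (z₁.1 - p.1)
    · exact cfg.key p e z₁ he hline hz₁ h1 hd
    · push_neg at h1
      have he' : Int.gcd (-e.1) (-e.2) = 1 := by rw [Int.neg_gcd, Int.gcd_neg]; exact he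
      have hline' : ∀ j : ℤ, 0 ≤ j → j ≤ 8 →
          cfg.M (p.1 + 8 * e.1 + j * (-e.1), p.2 + 8 * e.2 + j * (-e.2)) := by
        intro j hj0 hj8
        have hmem := hline (8 - j) (by omega) (by omega)
        have a1 : p.1 + (8 - j) * e.1 = p.1 + 8 * e.1 + j * (-e.1) := by ring
        have a2 : p.2 + (8 - j) * e.2 = p.2 + 8 * e.2 + j * (-e.2) := by ring
        rw [a1, a2] at hmem
        exact hmem
      have ht' : 2 ≤ (-e.1) * (z₂.2 - (p.2 + 8 * e.2)) - (-e.2) * (z₂.1 - (p.1 + 8 * e.1)) := by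
        nlinarith [hsp, h1]
      have hd' : (-e.1) * (cfg.p0.2 - (p.2 + 8 * e.2)) -
          (-e.2) * (cfg.p0.1 - (p.1 + 8 * e.1)) ≠ 0 := by
        intro h
        apply hd
        linear_combination -h
      exact cfg.key (p.1 + 8 * e.1, p.2 + 8 * e.2) (-e.1, -e.2) z₂ he' hline' hz₂ ht' hd'

lemma Cfg.eight (cfg : Cfg) (u v : ℤ × ℤ) (hv : ¬(v.1 = 0 ∧ v.2 = 0)) (hu : cfg.M u)
    (h8 : cfg.M (u.1 + 8 * v.1, u.2 + 8 * v.2)) : False := by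
  have hg0 : 0 < Int.gcd v.1 v.2 := by
    rcases Nat.eq_zero_or_pos (Int.gcd v.1 v.2) with h | h
    · exact absurd (Int.gcd_eq_zero_iff.mp h) hv
    · exact h
  set g : ℕ := Int.gcd v.1 v.2 with hgdef
  set e : ℤ × ℤ := (v.1 / (g:ℤ), v.2 / (g:ℤ)) with hedef
  have hdvd1 : (g:ℤ) ∣ v.1 := Int.gcd_dvd_left _ _
  have hdvd2 : (g:ℤ) ∣ v.2 := Int.gcd_dvd_right _ _
  have hv1 : v.1 = (g:ℤ) * e.1 := (Int.mul_ediv_cancel' hdvd1).symm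
  have hv2 : v.2 = (g:ℤ) * e.2 := (Int.mul_ediv_cancel' hdvd2).symm
  have hee : Int.gcd e.1 e.2 = 1 := Int.gcd_div_gcd_div_gcd hg0
  apply cfg.nine u e hee
  intro j hj0 hj8
  have hgz : (1:ℤ) ≤ (g:ℤ) := by exact_mod_cast hg0
  have hgR : (0:ℝ) < (g:ℝ) := by exact_mod_cast hg0
  have hjgR : (j:ℝ) ≤ 8 * (g:ℝ) := by
    have h8g : (j:ℤ) ≤ 8 * (g:ℤ) := by nlinarith
    exact_mod_cast h8g
  apply cfg.seg hu h8 _ (1 - (j:ℝ) / (8 * (g:ℝ))) ((j:ℝ) / (8 * (g:ℝ))) ?_ ?_ (by ring) ?_ ?_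
  · rw [sub_nonneg, div_le_one (by linarith)]
    exact hjgR
  · apply div_nonneg (by exact_mod_cast hj0) (by linarith)
  · show ((u.1 + j * e.1 : ℤ) : ℝ) = _ * (u.1 : ℝ) + _ * ((u.1 + 8 * v.1 : ℤ) : ℝ)
    rw [hv1]
    push_cast
    field_simp
    ring
  · show ((u.2 + j * e.2 : ℤ) : ℝ) = _ * (u.2 : ℝ) + _ * ((u.2 + 8 * v.2 : ℤ) : ℝ)
    rw [hv2]
    push_cast
    field_simp
    ring

lemma Cfg.triple (cfg : Cfg) {x y z : ℤ × ℤ} (hx : cfg.M x) (hy : cfg.M y) (hz : cfg.M z)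
    (hxy : x ≠ y) (hxz : x ≠ z) (hyz : y ≠ z)
    (hd1 : (4:ℤ) ∣ y.1 - x.1) (hd2 : (4:ℤ) ∣ y.2 - x.2)
    (hd3 : (4:ℤ) ∣ z.1 - x.1) (hd4 : (4:ℤ) ∣ z.2 - x.2) : False := by
  obtain ⟨h1, hh1⟩ := hd1
  obtain ⟨h2, hh2⟩ := hd2
  obtain ⟨k1, hk1⟩ := hd3
  obtain ⟨k2, hk2⟩ := hd4
  by_cases c1 : (2:ℤ) ∣ h1 ∧ (2:ℤ) ∣ h2
  · obtain ⟨⟨a1, ha1⟩, ⟨a2, ha2⟩⟩ := c1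
    apply cfg.eight x (a1, a2) ?_ hx ?_
    · show ¬(a1 = 0 ∧ a2 = 0)
      rintro ⟨e1, e2⟩
      apply hxy
      apply Prod.ext <;> omega
    · show cfg.M (x.1 + 8 * a1, x.2 + 8 * a2)
      have hEq : (x.1 + 8 * a1, x.2 + 8 * a2) = y := by
        apply Prod.ext <;> simp only [] <;> omega
      rw [hEq]
      exact hy
  · by_cases c2 : (2:ℤ) ∣ k1 ∧ (2:ℤ) ∣ k2
    · obtain ⟨⟨a1, ha1⟩, ⟨a2, ha2⟩⟩ := c2
      apply cfg.eight x (a1, a2) ?_ hx ?_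
      · show ¬(a1 = 0 ∧ a2 = 0)
        rintro ⟨e1, e2⟩
        apply hxz
        apply Prod.ext <;> omega
      · show cfg.M (x.1 + 8 * a1, x.2 + 8 * a2)
        have hEq : (x.1 + 8 * a1, x.2 + 8 * a2) = z := by
          apply Prod.ext <;> simp only [] <;> omega
        rw [hEq]
        exact hz
    · by_cases c3 : (2:ℤ) ∣ (k1 - h1) ∧ (2:ℤ) ∣ (k2 - h2)
      · obtain ⟨⟨a1, ha1⟩, ⟨a2, ha2⟩⟩ := c3
        apply cfg.eight y (a1, a2) ?_ hy ?_
        · show ¬(a1 = 0 ∧ a2 = 0)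
          rintro ⟨e1, e2⟩
          apply hyz
          apply Prod.ext <;> omega
        · show cfg.M (y.1 + 8 * a1, y.2 + 8 * a2)
          have hEq : (y.1 + 8 * a1, y.2 + 8 * a2) = z := by
            apply Prod.ext <;> simp only [] <;> omega
          rw [hEq]
          exact hz
      · -- grid case
        have hH : ((h1 : ZMod 2), (h2 : ZMod 2)) ≠ (0 : ZMod 2 × ZMod 2) := by
          intro hEq
          exact c1 ⟨(dvd2_iff h1).mpr (congrArg Prod.fst hEq),
                    (dvd2_iff h2).mpr (congrArg Prod.snd hEq)⟩
        have hK : ((k1 : ZMod 2), (k2 : ZMod 2)) ≠ (0 : ZMod 2 × ZMod 2) := by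
          intro hEq
          exact c2 ⟨(dvd2_iff k1).mpr (congrArg Prod.fst hEq),
                    (dvd2_iff k2).mpr (congrArg Prod.snd hEq)⟩
        have hHK : ((h1 : ZMod 2), (h2 : ZMod 2)) ≠ ((k1 : ZMod 2), (k2 : ZMod 2)) := by
          intro hEq
          apply c3
          constructor
          · have h' : (h1 : ZMod 2) = (k1 : ZMod 2) := congrArg Prod.fst hEq
            rw [dvd2_iff]
            push_cast
            rw [h']
            ring
          · have h' : (h2 : ZMod 2) = (k2 : ZMod 2) := congrArg Prod.snd hEq
            rw [dvd2_iff]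
            push_cast
            rw [h']
            ring
        obtain ⟨a, b, hab1, hab2⟩ := solve2 ((h1 : ZMod 2), (h2 : ZMod 2))
          ((k1 : ZMod 2), (k2 : ZMod 2))
          (((cfg.p0.1 - x.1 : ℤ) : ZMod 2), ((cfg.p0.2 - x.2 : ℤ) : ZMod 2)) hH hK hHK
        have hab1' : a * (h1 : ZMod 2) + b * (k1 : ZMod 2) = ((cfg.p0.1 - x.1 : ℤ) : ZMod 2) :=
          hab1
        have hab2' : a * (h2 : ZMod 2) + b * (k2 : ZMod 2) = ((cfg.p0.2 - x.2 : ℤ) : ZMod 2) :=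
          hab2
        obtain ⟨α, hα0, hα1, hαc⟩ : ∃ α : ℤ, 0 ≤ α ∧ α ≤ 1 ∧ ((α : ZMod 2) = a) := by
          rcases zmod2_cases a with h | h
          · exact ⟨0, le_rfl, by norm_num, by rw [h]; norm_num⟩
          · exact ⟨1, by norm_num, le_rfl, by rw [h]; norm_num⟩
        obtain ⟨β, hβ0, hβ1, hβc⟩ : ∃ β : ℤ, 0 ≤ β ∧ β ≤ 1 ∧ ((β : ZMod 2) = b) := by
          rcases zmod2_cases b with h | h
          · exact ⟨0, le_rfl, by norm_num, by rw [h]; norm_num⟩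
          · exact ⟨1, by norm_num, le_rfl, by rw [h]; norm_num⟩
        have hmem : ∀ s : ℤ, 0 ≤ s → s ≤ 3 →
            cfg.M (x.1 + s * h1 + β * k1, x.2 + s * h2 + β * k2) := by
          intro s hs0 hs3
          have h1R : (s:ℝ) ≤ 3 := by exact_mod_cast hs3
          have h2R : (β:ℝ) ≤ 1 := by exact_mod_cast hβ1
          have h3R : (0:ℝ) ≤ (s:ℝ) := by exact_mod_cast hs0
          have h4R : (0:ℝ) ≤ (β:ℝ) := by exact_mod_cast hβ0
          apply cfg.h3 x y z _ hx hy hz (1 - (s:ℝ)/4 - (β:ℝ)/4) ((s:ℝ)/4) ((β:ℝ)/4)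
            (by linarith) (by linarith) (by linarith) (by ring) ?_ ?_
          · show ((x.1 + s * h1 + β * k1 : ℤ) : ℝ) = _
            have hy1 : (y.1 : ℝ) = (x.1 : ℝ) + 4 * (h1 : ℝ) := by
              have hh : y.1 = x.1 + 4 * h1 := by omega
              exact_mod_cast congrArg Int.cast hh
            have hz1 : (z.1 : ℝ) = (x.1 : ℝ) + 4 * (k1 : ℝ) := by
              have hh : z.1 = x.1 + 4 * k1 := by omega
              exact_mod_cast congrArg Int.cast hh
            rw [hy1, hz1]
            push_cast
            ring
          · show ((x.2 + s * h2 + β * k2 : ℤ) : ℝ) = _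
            have hy2 : (y.2 : ℝ) = (x.2 : ℝ) + 4 * (h2 : ℝ) := by
              have hh : y.2 = x.2 + 4 * h2 := by omega
              exact_mod_cast congrArg Int.cast hh
            have hz2 : (z.2 : ℝ) = (x.2 : ℝ) + 4 * (k2 : ℝ) := by
              have hh : z.2 = x.2 + 4 * k2 := by omega
              exact_mod_cast congrArg Int.cast hh
            rw [hy2, hz2]
            push_cast
            ring
        have hP1 := hmem α hα0 (by omega)
        have hP2 := hmem (α + 2) (by omega) (by omega)
        have h2z : (2 : ZMod 2) = 0 := by decide
        have hev1 : (x.1 + α * h1 + β * k1, x.2 + α * h2 + β * k2) = cfg.p0 := by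
          apply cfg.even_eq hP1
          · show (2:ℤ) ∣ x.1 + α * h1 + β * k1 - cfg.p0.1
            rw [dvd2_iff]
            have hcast : ((x.1 + α * h1 + β * k1 - cfg.p0.1 : ℤ) : ZMod 2)
                = (α : ZMod 2) * (h1 : ZMod 2) + (β : ZMod 2) * (k1 : ZMod 2)
                  - ((cfg.p0.1 - x.1 : ℤ) : ZMod 2) := by
              push_cast
              ring
            rw [hcast, hαc, hβc, hab1', sub_self]
          · show (2:ℤ) ∣ x.2 + α * h2 + β * k2 - cfg.p0.2
            rw [dvd2_iff]
            have hcast : ((x.2 + α * h2 + β * k2 - cfg.p0.2 : ℤ) : ZMod 2)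
                = (α : ZMod 2) * (h2 : ZMod 2) + (β : ZMod 2) * (k2 : ZMod 2)
                  - ((cfg.p0.2 - x.2 : ℤ) : ZMod 2) := by
              push_cast
              ring
            rw [hcast, hαc, hβc, hab2', sub_self]
        have hev2 : (x.1 + (α + 2) * h1 + β * k1, x.2 + (α + 2) * h2 + β * k2) = cfg.p0 := by
          apply cfg.even_eq hP2
          · show (2:ℤ) ∣ x.1 + (α + 2) * h1 + β * k1 - cfg.p0.1
            rw [dvd2_iff]
            have hcast : ((x.1 + (α + 2) * h1 + β * k1 - cfg.p0.1 : ℤ) : ZMod 2)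
                = ((α : ZMod 2) * (h1 : ZMod 2) + (β : ZMod 2) * (k1 : ZMod 2)
                  - ((cfg.p0.1 - x.1 : ℤ) : ZMod 2)) + 2 * (h1 : ZMod 2) := by
              push_cast
              ring
            rw [hcast, hαc, hβc, hab1', sub_self, h2z]
            ring
          · show (2:ℤ) ∣ x.2 + (α + 2) * h2 + β * k2 - cfg.p0.2
            rw [dvd2_iff]
            have hcast : ((x.2 + (α + 2) * h2 + β * k2 - cfg.p0.2 : ℤ) : ZMod 2)
                = ((α : ZMod 2) * (h2 : ZMod 2) + (β : ZMod 2) * (k2 : ZMod 2)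
                  - ((cfg.p0.2 - x.2 : ℤ) : ZMod 2)) + 2 * (h2 : ZMod 2) := by
              push_cast
              ring
            rw [hcast, hαc, hβc, hab2', sub_self, h2z]
            ring
        have hcc := hev1.trans hev2.symm
        have hc1 : x.1 + α * h1 + β * k1 = x.1 + (α + 2) * h1 + β * k1 :=
          congrArg Prod.fst hcc
        have hc2 : x.2 + α * h2 + β * k2 = x.2 + (α + 2) * h2 + β * k2 :=
          congrArg Prod.snd hcc
        have hh10 : h1 = 0 := by linarith
        have hh20 : h2 = 0 := by linarith
        apply hxy
        apply Prod.ext <;> omega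

lemma Cfg.claimC (cfg : Cfg) {x y z : ℤ × ℤ} (hx : cfg.M x) (hy : cfg.M y) (hz : cfg.M z)
    (hx0 : x ≠ cfg.p0)
    (hxy : x ≠ y) (hxz : x ≠ z) (hyz : y ≠ z)
    (rxy : ((4:ℤ) ∣ x.1 - y.1 ∧ (4:ℤ) ∣ x.2 - y.2) ∨
           ((4:ℤ) ∣ x.1 + y.1 - 2 * cfg.p0.1 ∧ (4:ℤ) ∣ x.2 + y.2 - 2 * cfg.p0.2))
    (rxz : ((4:ℤ) ∣ x.1 - z.1 ∧ (4:ℤ) ∣ x.2 - z.2) ∨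
           ((4:ℤ) ∣ x.1 + z.1 - 2 * cfg.p0.1 ∧ (4:ℤ) ∣ x.2 + z.2 - 2 * cfg.p0.2))
    (ryz : ((4:ℤ) ∣ y.1 - z.1 ∧ (4:ℤ) ∣ y.2 - z.2) ∨
           ((4:ℤ) ∣ y.1 + z.1 - 2 * cfg.p0.1 ∧ (4:ℤ) ∣ y.2 + z.2 - 2 * cfg.p0.2)) : False := by
  have ruleR : ∀ a b c' : ℤ × ℤ, cfg.M a → cfg.M b → cfg.M c' → a ≠ b →
      ((4:ℤ) ∣ c'.1 + a.1 - 2 * cfg.p0.1) → ((4:ℤ) ∣ c'.2 + a.2 - 2 * cfg.p0.2) →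
      ((4:ℤ) ∣ c'.1 + b.1 - 2 * cfg.p0.1) → ((4:ℤ) ∣ c'.2 + b.2 - 2 * cfg.p0.2) → False := by
    intro a b c' ha hb hc' hab o1 o2 o3 o4
    have mid : ∀ d : ℤ × ℤ, cfg.M d → ((4:ℤ) ∣ c'.1 + d.1 - 2 * cfg.p0.1) →
        ((4:ℤ) ∣ c'.2 + d.2 - 2 * cfg.p0.2) →
        c'.1 + d.1 = 2 * cfg.p0.1 ∧ c'.2 + d.2 = 2 * cfg.p0.2 := by
      intro d hd q1 q2
      obtain ⟨m1, hm1⟩ : (2:ℤ) ∣ c'.1 + d.1 := by omega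
      obtain ⟨m2, hm2⟩ : (2:ℤ) ∣ c'.2 + d.2 := by omega
      have hmM : cfg.M (m1, m2) := by
        apply cfg.seg hc' hd (m1, m2) (1/2 : ℝ) (1/2 : ℝ) (by norm_num) (by norm_num)
          (by norm_num) ?_ ?_
        · show (m1 : ℝ) = 1/2 * (c'.1 : ℝ) + 1/2 * (d.1 : ℝ)
          have hcast : ((c'.1 + d.1 : ℤ) : ℝ) = 2 * (m1 : ℝ) := by exact_mod_cast congrArg Int.cast hm1
          push_cast at hcast
          linarith
        · show (m2 : ℝ) = 1/2 * (c'.2 : ℝ) + 1/2 * (d.2 : ℝ)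
          have hcast : ((c'.2 + d.2 : ℤ) : ℝ) = 2 * (m2 : ℝ) := by exact_mod_cast congrArg Int.cast hm2
          push_cast at hcast
          linarith
      have hmp : (m1, m2) = cfg.p0 := by
        apply cfg.even_eq hmM
        · show (2:ℤ) ∣ m1 - cfg.p0.1
          omega
        · show (2:ℤ) ∣ m2 - cfg.p0.2
          omega
      have e1 : m1 = cfg.p0.1 := congrArg Prod.fst hmp
      have e2 : m2 = cfg.p0.2 := congrArg Prod.snd hmp
      omega
    have r1 := mid a ha o1 o2
    have r2 := mid b hb o3 o4
    apply hab
    apply Prod.ext <;> omega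
  have excl : ∀ a b : ℤ × ℤ, cfg.M a → a ≠ cfg.p0 →
      ((4:ℤ) ∣ a.1 - b.1) → ((4:ℤ) ∣ a.2 - b.2) →
      ((4:ℤ) ∣ a.1 + b.1 - 2 * cfg.p0.1) → ((4:ℤ) ∣ a.2 + b.2 - 2 * cfg.p0.2) → False := by
    intro a b ha ha0 s1 s2 o1 o2
    apply ha0
    apply cfg.even_eq ha <;> omega
  rcases rxy with ⟨s1, s2⟩ | ⟨o1, o2⟩
  · rcases rxz with ⟨s3, s4⟩ | ⟨o3, o4⟩
    · exact cfg.triple hx hy hz hxy hxz hyz (by omega) (by omega) (by omega) (by omega)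
    · rcases ryz with ⟨s5, s6⟩ | ⟨o5, o6⟩
      · exact excl x z hx hx0 (by omega) (by omega) o3 o4
      · exact ruleR x y z hx hy hz hxy (by omega) (by omega) (by omega) (by omega)
  · rcases rxz with ⟨s3, s4⟩ | ⟨o3, o4⟩
    · rcases ryz with ⟨s5, s6⟩ | ⟨o5, o6⟩
      · exact excl x y hx hx0 (by omega) (by omega) o1 o2
      · exact ruleR x z y hx hz hy hxz (by omega) (by omega) (by omega) (by omega)
    · exact ruleR y z x hy hz hx hyz (by omega) (by omega) (by omega) (by omega)

end Panop

/-- A panoptigon of lattice width at least 3 has at most 13 lattice points. -/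
theorem panoptigon_lw3_card_le_13 (S : Finset (ℤ × ℤ)) (hS : S.Nonempty)
    (P : Set (ℝ × ℝ)) (hP : P = convexHull ℝ (latticeEmb '' (S : Set (ℤ × ℤ))))
    -- P is a panoptigon with panoptigon point p
    (hpan : ∃ p : ℤ × ℤ, latticeEmb p ∈ P ∧ ∀ q : ℤ × ℤ, latticeEmb q ∈ P → q ≠ p →
      ∀ r : ℤ × ℤ, latticeEmb r ∉ openSegment ℝ (latticeEmb p) (latticeEmb q))
    -- the lattice width of P is at least 3: in every primitive direction the width is ≥ 3
    (hlw : ∀ a b : ℤ, Int.gcd a b = 1 →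
      ∃ p ∈ S, ∃ q ∈ S, (a * p.2 - b * p.1) - (a * q.2 - b * q.1) ≥ 3) :
    Set.ncard {q : ℤ × ℤ | latticeEmb q ∈ P} ≤ 13 := by
  classical
  obtain ⟨p₀, hp₀P, hvis⟩ := hpan
  have hconv : Convex ℝ P := by rw [hP]; exact convex_convexHull ℝ _
  have h3 : ∀ a b c w : ℤ × ℤ, latticeEmb a ∈ P → latticeEmb b ∈ P → latticeEmb c ∈ P →
      ∀ A B C : ℝ, 0 ≤ A → 0 ≤ B → 0 ≤ C → A + B + C = 1 →
      (w.1 : ℝ) = A * a.1 + B * b.1 + C * c.1 → (w.2 : ℝ) = A * a.2 + B * b.2 + C * c.2 →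
      latticeEmb w ∈ P := by
    intro a b c w ha hb hc A B C hA hB hC hsum e1 e2
    have hcomb : latticeEmb w = A • latticeEmb a + B • latticeEmb b + C • latticeEmb c := by
      simp only [latticeEmb, Prod.smul_mk, smul_eq_mul, Prod.mk_add_mk, Prod.mk.injEq]
      exact ⟨by rw [e1], by rw [e2]⟩
    rw [hcomb]
    have hsum3 : ∑ i : Fin 3, ![A, B, C] i • ![latticeEmb a, latticeEmb b, latticeEmb c] i
        = A • latticeEmb a + B • latticeEmb b + C • latticeEmb c := by
      simp [Fin.sum_univ_three]
    rw [← hsum3]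
    apply hconv.sum_mem
    · intro i _
      fin_cases i <;> simp <;> assumption
    · simpa [Fin.sum_univ_three] using hsum
    · intro i _
      fin_cases i <;> simp <;> assumption
  have hprim : ∀ q : ℤ × ℤ, latticeEmb q ∈ P → q ≠ p₀ →
      Int.gcd (q.1 - p₀.1) (q.2 - p₀.2) = 1 := by
    intro q hq hne
    have hgne : Int.gcd (q.1 - p₀.1) (q.2 - p₀.2) ≠ 0 := by
      intro h
      obtain ⟨h1, h2⟩ := Int.gcd_eq_zero_iff.mp h
      apply hne
      apply Prod.ext <;> omega
    by_contra hg1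
    have hg2 : 2 ≤ Int.gcd (q.1 - p₀.1) (q.2 - p₀.2) := by omega
    obtain ⟨m1, hm1⟩ : ((Int.gcd (q.1 - p₀.1) (q.2 - p₀.2) : ℤ)) ∣ (q.1 - p₀.1) :=
      Int.gcd_dvd_left _ _
    obtain ⟨m2, hm2⟩ : ((Int.gcd (q.1 - p₀.1) (q.2 - p₀.2) : ℤ)) ∣ (q.2 - p₀.2) :=
      Int.gcd_dvd_right _ _
    set g : ℕ := Int.gcd (q.1 - p₀.1) (q.2 - p₀.2) with hgdef
    have hgR : (2:ℝ) ≤ (g:ℝ) := by exact_mod_cast hg2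
    have hgne0 : (g:ℝ) ≠ 0 := by linarith
    apply hvis q hq hne (p₀.1 + m1, p₀.2 + m2)
    refine ⟨1 - 1/(g:ℝ), 1/(g:ℝ), ?_, ?_, by ring, ?_⟩
    · have h12 : 1/(g:ℝ) ≤ 1/2 := by
        apply one_div_le_one_div_of_le (by norm_num) hgR
      linarith
    · apply one_div_pos.mpr
      linarith
    · show (1 - 1/(g:ℝ)) • latticeEmb p₀ + (1/(g:ℝ)) • latticeEmb q
        = latticeEmb (p₀.1 + m1, p₀.2 + m2)
      simp only [latticeEmb, Prod.smul_mk, smul_eq_mul, Prod.mk_add_mk, Prod.mk.injEq]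
      constructor
      · have hq1 : (q.1 : ℝ) = (p₀.1 : ℝ) + (g:ℝ) * (m1:ℝ) := by
          have hh : q.1 = p₀.1 + (g:ℤ) * m1 := by linarith [hm1]
          exact_mod_cast congrArg Int.cast hh
        rw [hq1]
        push_cast
        field_simp
        ring
      · have hq2 : (q.2 : ℝ) = (p₀.2 : ℝ) + (g:ℝ) * (m2:ℝ) := by
          have hh : q.2 = p₀.2 + (g:ℤ) * m2 := by linarith [hm2]
          exact_mod_cast congrArg Int.cast hh
        rw [hq2]
        push_cast
        field_simp
        ring
  have hwid : ∀ a b : ℤ, Int.gcd a b = 1 → ∃ z₁ z₂ : ℤ × ℤ,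
      (latticeEmb z₁ ∈ P) ∧ (latticeEmb z₂ ∈ P) ∧
      (a * z₁.2 - b * z₁.1) - (a * z₂.2 - b * z₂.1) ≥ 3 := by
    intro a b hab
    obtain ⟨s1, hs1, s2, hs2, hsp⟩ := hlw a b hab
    have hm : ∀ s : ℤ × ℤ, s ∈ S → latticeEmb s ∈ P := by
      intro s hs
      rw [hP]
      exact subset_convexHull ℝ _ (Set.mem_image_of_mem _ (Finset.mem_coe.mpr hs))
    exact ⟨s1, s2, hm s1 hs1, hm s2 hs2, hsp⟩
  let cfg : Panop.Cfg :=
    { M := fun q => latticeEmb q ∈ P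
      p0 := p₀
      hp0 := hp₀P
      h3 := h3
      hprim := hprim
      hwidth := hwid }
  have hcfgM : ∀ q : ℤ × ℤ, latticeEmb q ∈ P → cfg.M q := fun q h => h
  -- the mod 4 class map
  set cl : ℤ × ℤ → ZMod 4 × ZMod 4 :=
    fun q => (((q.1 - p₀.1 : ℤ) : ZMod 4), ((q.2 - p₀.2 : ℤ) : ZMod 4)) with hcl
  have pair_small : ∀ κ : ZMod 4 × ZMod 4, κ ≠ 0 → -κ ≠ 0 → ∃ u v : ℤ × ℤ,
      ∀ q : ℤ × ℤ, latticeEmb q ∈ P → (cl q = κ ∨ cl q = -κ) → (q = u ∨ q = v) := by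
    intro κ hκ hκ'
    by_contra hcon
    push_neg at hcon
    obtain ⟨x, hxP, hxc, -, -⟩ := hcon p₀ p₀
    obtain ⟨y, hyP, hyc, hyx, -⟩ := hcon x x
    obtain ⟨z, hzP, hzc, hzx, hzy⟩ := hcon x y
    have hne_p0 : ∀ q : ℤ × ℤ, (cl q = κ ∨ cl q = -κ) → q ≠ p₀ := by
      intro q hc hq
      have h0 : cl q = 0 := by
        rw [hq, hcl]
        simp
      rcases hc with h | h
      · rw [h0] at h; exact hκ h.symm
      · rw [h0] at h; exact hκ' h.symm
    have mkrel : ∀ q q' : ℤ × ℤ, (cl q = κ ∨ cl q = -κ) → (cl q' = κ ∨ cl q' = -κ) →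
        (((4:ℤ) ∣ q.1 - q'.1 ∧ (4:ℤ) ∣ q.2 - q'.2) ∨
         ((4:ℤ) ∣ q.1 + q'.1 - 2 * p₀.1 ∧ (4:ℤ) ∣ q.2 + q'.2 - 2 * p₀.2)) := by
      intro q q' hq hq'
      have samec : cl q = cl q' → ((4:ℤ) ∣ q.1 - q'.1 ∧ (4:ℤ) ∣ q.2 - q'.2) := by
        intro h
        have h1 : ((q.1 - p₀.1 : ℤ) : ZMod 4) = ((q'.1 - p₀.1 : ℤ) : ZMod 4) :=
          congrArg Prod.fst h
        have h2 : ((q.2 - p₀.2 : ℤ) : ZMod 4) = ((q'.2 - p₀.2 : ℤ) : ZMod 4) :=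
          congrArg Prod.snd h
        constructor
        · have := Panop.zmod4_sub h1
          omega
        · have := Panop.zmod4_sub h2
          omega
      have oppc : ∀ u : ZMod 4 × ZMod 4, cl q = u → cl q' = -u →
          ((4:ℤ) ∣ q.1 + q'.1 - 2 * p₀.1 ∧ (4:ℤ) ∣ q.2 + q'.2 - 2 * p₀.2) := by
        intro u h h'
        have h1 : ((q.1 - p₀.1 : ℤ) : ZMod 4) = u.1 := congrArg Prod.fst h
        have h2 : ((q.2 - p₀.2 : ℤ) : ZMod 4) = u.2 := congrArg Prod.snd h
        have h1' : ((q'.1 - p₀.1 : ℤ) : ZMod 4) = -u.1 := by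
          have := congrArg Prod.fst h'
          simpa [hcl] using this
        have h2' : ((q'.2 - p₀.2 : ℤ) : ZMod 4) = -u.2 := by
          have := congrArg Prod.snd h'
          simpa [hcl] using this
        constructor
        · have := Panop.zmod4_add h1 h1'
          omega
        · have := Panop.zmod4_add h2 h2'
          omega
      rcases hq with h | h <;> rcases hq' with h' | h'
      · exact Or.inl (samec (h.trans h'.symm))
      · exact Or.inr (oppc κ h h')
      · exact Or.inr (oppc (-κ) h (by rw [h', neg_neg]))
      · exact Or.inl (samec (h.trans h'.symm))
    exact cfg.claimC (hcfgM x hxP) (hcfgM y hyP) (hcfgM z hzP) (hne_p0 x hxc)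
      (Ne.symm hyx) (Ne.symm hzx) (Ne.symm hzy)
      (mkrel x y hxc hyc) (mkrel x z hxc hzc) (mkrel y z hyc hzc)
  obtain ⟨u1, v1, hB1⟩ := pair_small (1, 0) (by decide) (by decide)
  obtain ⟨u2, v2, hB2⟩ := pair_small (0, 1) (by decide) (by decide)
  obtain ⟨u3, v3, hB3⟩ := pair_small (1, 1) (by decide) (by decide)
  obtain ⟨u4, v4, hB4⟩ := pair_small (1, 3) (by decide) (by decide)
  obtain ⟨u5, v5, hB5⟩ := pair_small (2, 1) (by decide) (by decide)
  obtain ⟨u6, v6, hB6⟩ := pair_small (1, 2) (by decide) (by decide)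
  set L : List (ℤ × ℤ) := [p₀, u1, v1, u2, v2, u3, v3, u4, v4, u5, v5, u6, v6] with hL
  have hsub : {q : ℤ × ℤ | latticeEmb q ∈ P} ⊆ ↑L.toFinset := by
    intro q hq
    simp only [Set.mem_setOf_eq] at hq
    rw [Finset.mem_coe, List.mem_toFinset, hL]
    simp only [List.mem_cons, List.not_mem_nil, or_false]
    rcases eq_or_ne q p₀ with h | hne
    · exact Or.inl h
    · have hg := hprim q hq hne
      have hno : ¬((2:ℤ) ∣ (q.1 - p₀.1) ∧ (2:ℤ) ∣ (q.2 - p₀.2)) := by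
        rintro ⟨d1, d2⟩
        have h2g : (2:ℤ) ∣ (Int.gcd (q.1 - p₀.1) (q.2 - p₀.2) : ℤ) := Int.dvd_coe_gcd d1 d2
        rw [hg] at h2g
        norm_num at h2g
      have hnocl : ¬(((cl q).1 = 0 ∨ (cl q).1 = 2) ∧ ((cl q).2 = 0 ∨ (cl q).2 = 2)) := by
        intro hcl2
        exact hno ⟨(Panop.dvd2_iff4 _).mpr hcl2.1, (Panop.dvd2_iff4 _).mpr hcl2.2⟩
      have hcov := Panop.cover4 (cl q) hnocl
      rcases hcov with (h | h) | (h | h) | (h | h) | (h | h) | (h | h) | (h | h)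
      · rcases hB1 q hq (Or.inl h) with h' | h' <;> simp [h']
      · rcases hB1 q hq (Or.inr (by rw [h]; decide)) with h' | h' <;> simp [h']
      · rcases hB2 q hq (Or.inl h) with h' | h' <;> simp [h']
      · rcases hB2 q hq (Or.inr (by rw [h]; decide)) with h' | h' <;> simp [h']
      · rcases hB3 q hq (Or.inl h) with h' | h' <;> simp [h']
      · rcases hB3 q hq (Or.inr (by rw [h]; decide)) with h' | h' <;> simp [h']
      · rcases hB4 q hq (Or.inl h) with h' | h' <;> simp [h']
      · rcases hB4 q hq (Or.inr (by rw [h]; decide)) with h' | h' <;> simp [h']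
      · rcases hB5 q hq (Or.inl h) with h' | h' <;> simp [h']
      · rcases hB5 q hq (Or.inr (by rw [h]; decide)) with h' | h' <;> simp [h']
      · rcases hB6 q hq (Or.inl h) with h' | h' <;> simp [h']
      · rcases hB6 q hq (Or.inr (by rw [h]; decide)) with h' | h' <;> simp [h']
  calc Set.ncard {q : ℤ × ℤ | latticeEmb q ∈ P}
      ≤ Set.ncard (↑L.toFinset : Set (ℤ × ℤ)) :=
        Set.ncard_le_ncard hsub L.toFinset.finite_toSet
    _ = L.toFinset.card := Set.ncard_coe_finset _
    _ ≤ L.length := List.toFinset_card_le L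
    _ = 13 := by rw [hL]; rfl
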